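/- For an arc I ⊂ ∂B₁(0) of length α = H¹(I) ≤ 2π/3 with endpoints a and b, let Y(I) = [0,ξ] ∪ [ξ,a] ∪ [ξ,b] denote the fork connecting the center 0 of the unit ball to the two endpoints of the arc, in which the branch point ξ is chosen such that the three segments form equal angles of 120° at ξ. Then H¹(Y(I)) = 2 sin(α/2 + π/6). -/

import Mathlib

open MeasureTheory Set Metric
open scoped ENNReal RealInnerProductSpace

set_option maxHeartbeats 1000000

noncomputable section

/-- The Euclidean plane. -/
abbrev E2 : Type := EuclideanSpace ℝ (Fin 2)

lemma seg_measurable (x y : E2) : NullMeasurableSet (segment ℝ x y) μH[1] := by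
  have hc : IsCompact (segment ℝ x y) := by
    rw [segment_eq_image']
    exact isCompact_Icc.image (by continuity)
  exact hc.isClosed.measurableSet.nullMeasurableSet

lemma seg_inter_subset (ξ p q : E2)
    (h : InnerProductGeometry.angle (p - ξ) (q - ξ) ≠ 0) :
    segment ℝ ξ p ∩ segment ℝ ξ q ⊆ {ξ} := by
  rintro x ⟨hx1, hx2⟩
  rw [segment_eq_image'] at hx1 hx2
  obtain ⟨s, hs, rfl⟩ := hx1
  obtain ⟨r, hr, heq⟩ := hx2
  have hse : s • (p - ξ) = r • (q - ξ) := by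
    have := heq
    simpa [add_right_inj] using this.symm
  by_cases h0 : s • (p - ξ) = 0
  · simp [h0]
  · exfalso
    have hs0 : s ≠ 0 := by rintro rfl; simp at h0
    have hp : p - ξ ≠ 0 := by rintro h'; rw [h'] at h0; simp at h0
    have hr0 : r ≠ 0 := by rintro rfl; rw [hse] at h0; simp at h0
    have hq : q - ξ ≠ 0 := by
      rintro h'; rw [h'] at hse; simp [hse] at h0
    have hspos : 0 < s := lt_of_le_of_ne hs.1 (Ne.symm hs0)
    have hrpos : 0 < r := lt_of_le_of_ne hr.1 (Ne.symm hr0)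
    apply h
    calc InnerProductGeometry.angle (p - ξ) (q - ξ)
        = InnerProductGeometry.angle (s • (p - ξ)) (q - ξ) :=
          (InnerProductGeometry.angle_smul_left_of_pos _ _ hspos).symm
      _ = InnerProductGeometry.angle (r • (q - ξ)) (q - ξ) := by rw [hse]
      _ = InnerProductGeometry.angle (q - ξ) (q - ξ) :=
          InnerProductGeometry.angle_smul_left_of_pos _ _ hrpos
      _ = 0 := InnerProductGeometry.angle_self hq

/-- **Lemma A.4 (Length of a Steiner fork).** Let `a, b` be the endpoints of an arc of
length `α ≤ 2π/3` on the unit circle, and let `Y = [0,ξ] ∪ [ξ,a] ∪ [ξ,b]` be the fork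
connecting the center `0` to `a` and `b` whose branch point `ξ` forms three equal
angles of `120°`. Then `H¹(Y) = 2 sin(α/2 + π/6)`. -/
theorem steiner_fork_length
    (a b ξ : E2) (ha : ‖a‖ = 1) (hb : ‖b‖ = 1) (hab : a ≠ b)
    (α : ℝ) (hα : α = InnerProductGeometry.angle a b)
    (hα0 : 0 < α) (hα1 : α ≤ 2 * Real.pi / 3)
    (h1 : InnerProductGeometry.angle ((0:E2) - ξ) (a - ξ) = 2 * Real.pi / 3)
    (h2 : InnerProductGeometry.angle (a - ξ) (b - ξ) = 2 * Real.pi / 3)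
    (h3 : InnerProductGeometry.angle (b - ξ) ((0:E2) - ξ) = 2 * Real.pi / 3) :
    μH[1] (segment ℝ (0:E2) ξ ∪ segment ℝ ξ a ∪ segment ℝ ξ b)
      = ENNReal.ofReal (2 * Real.sin (α / 2 + Real.pi / 6)) := by
  have hπ := Real.pi_pos
  have hne : (2 * Real.pi / 3 : ℝ) ≠ Real.pi / 2 := by intro h; nlinarith
  have hne0 : (2 * Real.pi / 3 : ℝ) ≠ 0 := by positivity
  -- nonzero vectors
  have hx0 : (0:E2) - ξ ≠ 0 := by
    intro h; rw [h, InnerProductGeometry.angle_zero_left] at h1; exact hne h1.symm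
  have hxa : a - ξ ≠ 0 := by
    intro h; rw [h, InnerProductGeometry.angle_zero_right] at h1; exact hne h1.symm
  have hxb : b - ξ ≠ 0 := by
    intro h; rw [h, InnerProductGeometry.angle_zero_left] at h3; exact hne h3.symm
  set t := ‖(0:E2) - ξ‖ with ht_def
  set u := ‖a - ξ‖ with hu_def
  set v := ‖b - ξ‖ with hv_def
  have htpos : 0 < t := norm_pos_iff.2 hx0
  have hupos : 0 < u := norm_pos_iff.2 hxa
  have hvpos : 0 < v := norm_pos_iff.2 hxb
  have hcos23 : Real.cos (2 * Real.pi / 3) = -(1/2) := by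
    have h : (2 * Real.pi / 3 : ℝ) = Real.pi - Real.pi / 3 := by ring
    rw [h, Real.cos_pi_sub, Real.cos_pi_div_three]
  -- inner products
  have i1 : ⟪(0:E2) - ξ, a - ξ⟫ = -(1/2) * (t * u) := by
    rw [← InnerProductGeometry.cos_angle_mul_norm_mul_norm, h1, hcos23]
  have i2 : ⟪a - ξ, b - ξ⟫ = -(1/2) * (u * v) := by
    rw [← InnerProductGeometry.cos_angle_mul_norm_mul_norm, h2, hcos23]
  have i3 : ⟪b - ξ, (0:E2) - ξ⟫ = -(1/2) * (v * t) := by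
    rw [← InnerProductGeometry.cos_angle_mul_norm_mul_norm, h3, hcos23]
  -- inner product of a and b
  have iab : ⟪a, b⟫ = Real.cos α := by
    rw [hα, ← InnerProductGeometry.cos_angle_mul_norm_mul_norm, ha, hb]; ring
  -- law of cosines equations
  have E1 : u ^ 2 + t * u + t ^ 2 = 1 := by
    have h := norm_sub_sq_real ((a - ξ)) ((0:E2) - ξ)
    have h' : a - ξ - ((0:E2) - ξ) = a := by abel
    rw [h', real_inner_comm, i1, ha] at h
    nlinarith [h]
  have E2' : v ^ 2 + t * v + t ^ 2 = 1 := by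
    have h := norm_sub_sq_real ((b - ξ)) ((0:E2) - ξ)
    have h' : b - ξ - ((0:E2) - ξ) = b := by abel
    rw [h', i3, hb] at h
    linarith [h]
  have E3 : u ^ 2 + u * v + v ^ 2 = 2 - 2 * Real.cos α := by
    have h := norm_sub_sq_real ((a - ξ)) ((b - ξ))
    have h' : a - ξ - (b - ξ) = a - b := by abel
    rw [h', i2] at h
    have hab2 : ‖a - b‖ ^ 2 = 2 - 2 * Real.cos α := by
      rw [norm_sub_sq_real, ha, hb, iab]; ring
    linarith [h, hab2]
  -- trigonometric setup
  set c := Real.cos (α / 2) with hc_def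
  set s := Real.sin (α / 2) with hs_def
  have hcs : s ^ 2 + c ^ 2 = 1 := Real.sin_sq_add_cos_sq (α / 2)
  have hspos : 0 < s := Real.sin_pos_of_pos_of_lt_pi (by linarith) (by nlinarith)
  have hcosα : Real.cos α = 1 - 2 * s ^ 2 := by
    have h : α = 2 * (α / 2) := by ring
    rw [h, Real.cos_two_mul]
    nlinarith [hcs]
  have sqrt3 : Real.sqrt 3 ^ 2 = 3 := Real.sq_sqrt (by norm_num)
  have sqrt3pos : 0 < Real.sqrt 3 := Real.sqrt_pos.2 (by norm_num)
  -- u = v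
  have huv : u = v := by
    have h : (u - v) * (u + v + t) = 0 := by linear_combination E1 - E2'
    rcases mul_eq_zero.1 h with h' | h'
    · linarith
    · linarith
  -- value of u
  have hu : u = 2 * s / Real.sqrt 3 := by
    have hsq : u ^ 2 = (2 * s / Real.sqrt 3) ^ 2 := by
      field_simp
      nlinarith [E3, huv, hcosα]
    exact (sq_eq_sq₀ hupos.le (by positivity)).1 hsq
  -- T = c - s/√3 is nonnegative
  have hT : 0 ≤ c - s / Real.sqrt 3 := by
    have hcoseq : c - s / Real.sqrt 3 = 2 / Real.sqrt 3 * Real.cos (α / 2 + Real.pi / 6) := by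
      rw [Real.cos_add, Real.cos_pi_div_six, Real.sin_pi_div_six]
      field_simp
      ring
    have hnn : 0 ≤ Real.cos (α / 2 + Real.pi / 6) :=
      Real.cos_nonneg_of_mem_Icc ⟨by linarith, by linarith⟩
    rw [hcoseq]
    positivity
  -- value of t
  have ht : t = c - s / Real.sqrt 3 := by
    have hw2 : s ^ 2 = 3 * (s / Real.sqrt 3) ^ 2 := by
      rw [div_pow, sqrt3]; field_simp
    have hu' : u = 2 * (s / Real.sqrt 3) := by rw [hu]; ring
    have hTroot : (c - s / Real.sqrt 3) ^ 2 + u * (c - s / Real.sqrt 3) + u ^ 2 - 1 = 0 := by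
      rw [hu']
      linear_combination hcs - hw2
    have h : (t - (c - s / Real.sqrt 3)) * (t + (c - s / Real.sqrt 3) + u) = 0 := by
      linear_combination E1 - hTroot
    rcases mul_eq_zero.1 h with h' | h'
    · linarith
    · linarith
  -- total length
  have htotal : t + u + v = 2 * Real.sin (α / 2 + Real.pi / 6) := by
    rw [Real.sin_add, Real.cos_pi_div_six, Real.sin_pi_div_six, ht, ← huv, hu]
    have key : 3 * (s / Real.sqrt 3) = Real.sqrt 3 * s := by
      rw [mul_div_assoc', div_eq_iff (ne_of_gt sqrt3pos)]
      linear_combination (-s) * sqrt3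
    have h2s : 2 * s / Real.sqrt 3 = 2 * (s / Real.sqrt 3) := by ring
    rw [h2s]
    linarith [key]
  -- measure computation
  have hA : segment ℝ (0:E2) ξ = segment ℝ ξ 0 := segment_symm ℝ _ _
  have hAC : segment ℝ (0:E2) ξ ∩ segment ℝ ξ b ⊆ {ξ} := by
    rw [hA]
    exact seg_inter_subset ξ 0 b (by rw [InnerProductGeometry.angle_comm, h3]; exact hne0)
  have hBC : segment ℝ ξ a ∩ segment ℝ ξ b ⊆ {ξ} := by
    exact seg_inter_subset ξ a b (by rw [h2]; exact hne0)
  have hAB : segment ℝ (0:E2) ξ ∩ segment ℝ ξ a ⊆ {ξ} := by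
    rw [hA]
    exact seg_inter_subset ξ 0 a (by rw [h1]; exact hne0)
  have hatom : NoAtoms (μH[1] : Measure E2) := Measure.noAtoms_hausdorff E2 one_pos
  have hsing : μH[1] ({ξ} : Set E2) = 0 :=
    (hatom : NullSingletonClass (μH[1] : Measure E2)).measure_singleton ξ
  have hd1 : AEDisjoint μH[1] (segment ℝ (0:E2) ξ) (segment ℝ ξ a) :=
    measure_mono_null hAB hsing
  have hd2 : AEDisjoint μH[1] (segment ℝ (0:E2) ξ ∪ segment ℝ ξ a) (segment ℝ ξ b) := by
    refine measure_mono_null ?_ hsing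
    rw [union_inter_distrib_right]
    exact union_subset hAC hBC
  rw [measure_union₀ (seg_measurable ξ b) hd2, measure_union₀ (seg_measurable ξ a) hd1]
  rw [hausdorffMeasure_segment, hausdorffMeasure_segment, hausdorffMeasure_segment]
  rw [edist_dist, edist_dist, edist_dist, dist_eq_norm, dist_eq_norm, dist_eq_norm]
  rw [← ENNReal.ofReal_add (by positivity) (by positivity),
    ← ENNReal.ofReal_add (by positivity) (by positivity)]
  congr 1
  have hξa : ‖ξ - a‖ = u := by rw [hu_def, norm_sub_rev]
  have hξb : ‖ξ - b‖ = v := by rw [hv_def, norm_sub_rev]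
  rw [hξa, hξb, ← ht_def]
  linarith [htotal]

end
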